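/- Let G_1 and G_2 be finite simple graphs, each of order at least two. Then for every natural number i ≥ 1, d_0(G_1 ∨ G_2, i) = d_0(G_1, i) + d_0(G_2, i), where G_1 ∨ G_2 is the join of G_1 and G_2. -/

import Mathlib

open Finset

/-- `S` is a dominating set of `G`: every vertex not in `S` is adjacent to a vertex of `S`. -/
def IsDominatingSet {V : Type*} (G : SimpleGraph V) (S : Finset V) : Prop :=
  ∀ v : V, v ∉ S → ∃ u ∈ S, G.Adj u v

/-- `S` is an isolate dominating set of `G`: a dominating set whose induced
subgraph has an isolated vertex. -/
def IsIsolateDominatingSet {V : Type*} (G : SimpleGraph V) (S : Finset V) : Prop :=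
  IsDominatingSet G S ∧ ∃ v ∈ S, ∀ u ∈ S, ¬ G.Adj v u

/-- `d(G, i)`: the number of dominating sets of `G` of cardinality `i`. -/
noncomputable def domCount {V : Type*} [Fintype V] (G : SimpleGraph V) (i : ℕ) : ℕ :=
  Set.ncard {S : Finset V | IsDominatingSet G S ∧ S.card = i}

/-- `d₀(G, i)`: the number of isolate dominating sets of `G` of cardinality `i`. -/
noncomputable def isoDomCount {V : Type*} [Fintype V] (G : SimpleGraph V) (i : ℕ) : ℕ :=
  Set.ncard {S : Finset V | IsIsolateDominatingSet G S ∧ S.card = i}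

/-- `γ₀(G)`: the isolate domination number, the minimum cardinality of an
isolate dominating set of `G`. -/
noncomputable def isoDomNumber {V : Type*} [Fintype V] (G : SimpleGraph V) : ℕ :=
  sInf {k : ℕ | ∃ S : Finset V, IsIsolateDominatingSet G S ∧ S.card = k}

/-- The join `G₁ ∨ G₂` of two graphs: both graphs together with all edges between them. -/
def graphJoin {α β : Type*} (G : SimpleGraph α) (H : SimpleGraph β) :
    SimpleGraph (α ⊕ β) where
  Adj v w :=
    match v, w with
    | Sum.inl a, Sum.inl b => G.Adj a b
    | Sum.inr a, Sum.inr b => H.Adj a b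
    | Sum.inl _, Sum.inr _ => True
    | Sum.inr _, Sum.inl _ => True
  symm := by
    constructor
    rintro (a | a) (b | b) h <;> simp_all
    · exact G.adj_symm h
    · exact H.adj_symm h
  loopless := by
    constructor
    rintro (a | a) h <;> simp_all

theorem isoDomCount_join {α β : Type*} [Fintype α] [Fintype β]
    (G₁ : SimpleGraph α) (G₂ : SimpleGraph β)
    (h₁ : 2 ≤ Fintype.card α) (h₂ : 2 ≤ Fintype.card β)
    (i : ℕ) (hi : 1 ≤ i) :
    isoDomCount (graphJoin G₁ G₂) i = isoDomCount G₁ i + isoDomCount G₂ i := by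
  classical
  set f : Finset α → Finset (α ⊕ β) := fun A => A.map ⟨Sum.inl, Sum.inl_injective⟩ with hf
  set g : Finset β → Finset (α ⊕ β) := fun B => B.map ⟨Sum.inr, Sum.inr_injective⟩ with hg
  have memf : ∀ (A : Finset α) (x : α ⊕ β), x ∈ f A ↔ ∃ a ∈ A, Sum.inl a = x := by
    intro A x; simp [hf]
  have memg : ∀ (B : Finset β) (x : α ⊕ β), x ∈ g B ↔ ∃ b ∈ B, Sum.inr b = x := by
    intro B x; simp [hg]
  have key : {S : Finset (α ⊕ β) | IsIsolateDominatingSet (graphJoin G₁ G₂) S ∧ S.card = i}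
      = f '' {A : Finset α | IsIsolateDominatingSet G₁ A ∧ A.card = i}
        ∪ g '' {B : Finset β | IsIsolateDominatingSet G₂ B ∧ B.card = i} := by
    ext S
    simp only [Set.mem_setOf_eq, Set.mem_union, Set.mem_image]
    constructor
    · rintro ⟨⟨hdom, v, hvS, hviso⟩, hcard⟩
      rcases v with a | b
      · -- S is all in the left side
        have hpure : ∀ x ∈ S, ∃ c : α, x = Sum.inl c := by
          intro x hx
          rcases x with c | c
          · exact ⟨c, rfl⟩
          · exact absurd trivial (hviso _ hx)
        set A : Finset α := S.preimage Sum.inl (Sum.inl_injective.injOn) with hA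
        have hfA : f A = S := by
          ext x
          rw [memf]
          constructor
          · rintro ⟨c, hc, rfl⟩
            simpa [hA] using hc
          · intro hx
            obtain ⟨c, rfl⟩ := hpure x hx
            exact ⟨c, by simpa [hA] using hx, rfl⟩
        refine Or.inl ⟨A, ⟨⟨?_, ?_⟩, ?_⟩, hfA⟩
        · intro c hc
          have hc' : Sum.inl c ∉ S := by
            intro h; exact hc (by simpa [hA] using h)
          obtain ⟨u, huS, hadj⟩ := hdom _ hc'
          obtain ⟨d, rfl⟩ := hpure u huS
          exact ⟨d, by simpa [hA] using huS, hadj⟩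
        · have haA : a ∈ A := by simpa [hA] using hvS
          refine ⟨a, haA, fun u hu hadj => ?_⟩
          exact hviso (Sum.inl u) (by simpa [hA] using hu) hadj
        · rw [← hcard, ← hfA]; simp [hf]
      · -- S is all in the right side
        have hpure : ∀ x ∈ S, ∃ c : β, x = Sum.inr c := by
          intro x hx
          rcases x with c | c
          · exact absurd trivial (hviso _ hx)
          · exact ⟨c, rfl⟩
        set B : Finset β := S.preimage Sum.inr (Sum.inr_injective.injOn) with hB
        have hgB : g B = S := by
          ext x
          rw [memg]
          constructor
          · rintro ⟨c, hc, rfl⟩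
            simpa [hB] using hc
          · intro hx
            obtain ⟨c, rfl⟩ := hpure x hx
            exact ⟨c, by simpa [hB] using hx, rfl⟩
        refine Or.inr ⟨B, ⟨⟨?_, ?_⟩, ?_⟩, hgB⟩
        · intro c hc
          have hc' : Sum.inr c ∉ S := by
            intro h; exact hc (by simpa [hB] using h)
          obtain ⟨u, huS, hadj⟩ := hdom _ hc'
          obtain ⟨d, rfl⟩ := hpure u huS
          exact ⟨d, by simpa [hB] using huS, hadj⟩
        · have hbB : b ∈ B := by simpa [hB] using hvS
          refine ⟨b, hbB, fun u hu hadj => ?_⟩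
          exact hviso (Sum.inr u) (by simpa [hB] using hu) hadj
        · rw [← hcard, ← hgB]; simp [hg]
    · rintro (⟨A, ⟨⟨hdom, v, hvA, hviso⟩, hcard⟩, rfl⟩ | ⟨B, ⟨⟨hdom, v, hvB, hviso⟩, hcard⟩, rfl⟩)
      · have hANe : A.Nonempty := Finset.card_pos.mp (by omega)
        refine ⟨⟨?_, Sum.inl v, (memf A _).mpr ⟨v, hvA, rfl⟩, ?_⟩, by simp [hf, hcard]⟩
        · rintro (a | b) hx
          · have : a ∉ A := fun h => hx ((memf A _).mpr ⟨a, h, rfl⟩)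
            obtain ⟨u, huA, hadj⟩ := hdom a this
            exact ⟨Sum.inl u, (memf A _).mpr ⟨u, huA, rfl⟩, hadj⟩
          · obtain ⟨a, haA⟩ := hANe
            exact ⟨Sum.inl a, (memf A _).mpr ⟨a, haA, rfl⟩, trivial⟩
        · intro u hu
          obtain ⟨c, hcA, rfl⟩ := (memf A u).mp hu
          exact hviso c hcA
      · have hBNe : B.Nonempty := Finset.card_pos.mp (by omega)
        refine ⟨⟨?_, Sum.inr v, (memg B _).mpr ⟨v, hvB, rfl⟩, ?_⟩, by simp [hg, hcard]⟩
        · rintro (a | b) hx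
          · obtain ⟨c, hcB⟩ := hBNe
            exact ⟨Sum.inr c, (memg B _).mpr ⟨c, hcB, rfl⟩, trivial⟩
          · have : b ∉ B := fun h => hx ((memg B _).mpr ⟨b, h, rfl⟩)
            obtain ⟨u, huB, hadj⟩ := hdom b this
            exact ⟨Sum.inr u, (memg B _).mpr ⟨u, huB, rfl⟩, hadj⟩
        · intro u hu
          obtain ⟨c, hcB, rfl⟩ := (memg B u).mp hu
          exact hviso c hcB
  have finj : Function.Injective f := fun A B h => Finset.map_injective _ h
  have ginj : Function.Injective g := fun A B h => Finset.map_injective _ h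
  have hdisj : Disjoint (f '' {A : Finset α | IsIsolateDominatingSet G₁ A ∧ A.card = i})
      (g '' {B : Finset β | IsIsolateDominatingSet G₂ B ∧ B.card = i}) := by
    rw [Set.disjoint_left]
    rintro S ⟨A, ⟨_, hAcard⟩, rfl⟩ ⟨B, _, hBA⟩
    obtain ⟨a, haA⟩ := Finset.card_pos.mp (show 0 < A.card by omega)
    have : Sum.inl a ∈ g B := by rw [hBA]; exact (memf A _).mpr ⟨a, haA, rfl⟩
    obtain ⟨b, _, hb⟩ := (memg B _).mp this
    cases hb
  rw [isoDomCount, isoDomCount, isoDomCount, key,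
    Set.ncard_union_eq hdisj (Set.toFinite _) (Set.toFinite _),
    Set.ncard_image_of_injective _ finj, Set.ncard_image_of_injective _ ginj]
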